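/- Let G = (V,E) be a finite undirected unweighted graph, let v ∈ V, let A, B ⊆ V, and let ε > 0 be a real number. Let u ∈ B be a vertex with δ(v,u) = δ(v,B), let Q be a shortest v–u path in G, and let x₁ and x₂ be two vertices on Q with x₁ ≠ v appearing strictly before x₂ in the order along Q from v to u. If δ(v,B,x₁) ≤ (1+ε)·δ(v,B,x₂), then Ball^{x₁}(v,A,B,ε) ⊆ Ball(v,A,B) ∪ Ball^{x₂}(v,A,B). -/

import Mathlib

open scoped ENNReal Classical

/-- The graph `G` with vertex `x` "failed": edges incident to `x` are removed,
so that walks in `G.avoid x` are exactly walks of `G` avoiding `x`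
(for endpoints different from `x`). -/
def SimpleGraph.avoid {V : Type*} (G : SimpleGraph V) (x : V) : SimpleGraph V where
  Adj a b := G.Adj a b ∧ a ≠ x ∧ b ≠ x
  symm := ⟨fun _ _ h => ⟨h.1.symm, h.2.2, h.2.1⟩⟩
  loopless := ⟨fun a h => G.loopless.irrefl a h.1⟩

/-- `δ(a,b,x)` : the distance (in `ℕ∞`) between `a` and `b` in `G − x`,
with the convention that it is `∞` if `a = x` or `b = x`. -/
noncomputable def davoid {V : Type*} (G : SimpleGraph V) (a b x : V) : ℕ∞ :=
  if a = x ∨ b = x then ⊤ else (G.avoid x).edist a b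

/-- `δ(v,B)` : distance from `v` to the set `B`. -/
noncomputable def dset {V : Type*} (G : SimpleGraph V) (v : V) (B : Set V) : ℕ∞ :=
  ⨅ w ∈ B, G.edist v w

/-- `δ(v,B,x)` : distance from `v` to the set `B` in `G − x`. -/
noncomputable def dsetAvoid {V : Type*} (G : SimpleGraph V) (v : V) (B : Set V) (x : V) : ℕ∞ :=
  ⨅ w ∈ B, davoid G v w x

/-- `Ball(v,A,B) = {w ∈ A : δ(v,w) < δ(v,B)}`. -/
def ball {V : Type*} (G : SimpleGraph V) (v : V) (A B : Set V) : Set V :=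
  {w ∈ A | G.edist v w < dset G v B}

/-- `Ball^x(v,A,B) = {w ∈ A : δ(v,w,x) < δ(v,B,x)}`. -/
def ballAvoid {V : Type*} (G : SimpleGraph V) (v : V) (A B : Set V) (x : V) : Set V :=
  {w ∈ A | davoid G v w x < dsetAvoid G v B x}

/-- `Ball^x(v,A,B,ε) = {w ∈ A : (1+ε)·δ(v,w,x) < δ(v,B,x)}`. -/
def ballTrunc {V : Type*} (G : SimpleGraph V) (v : V) (A B : Set V) (x : V) (ε : ℝ) : Set V :=
  {w ∈ A | ENNReal.ofReal (1 + ε) * (davoid G v w x : ℝ≥0∞) < (dsetAvoid G v B x : ℝ≥0∞)}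

/-- `C^x(w,A,B,ε) = {v ∈ V : (1+ε)·δ(v,w,x) < δ(v,B,x)}`. -/
def clusterTrunc {V : Type*} (G : SimpleGraph V) (w : V) (B : Set V) (x : V) (ε : ℝ) : Set V :=
  {v | ENNReal.ofReal (1 + ε) * (davoid G v w x : ℝ≥0∞) < (dsetAvoid G v B x : ℝ≥0∞)}


section Aux
open SimpleGraph Walk

variable {V : Type*} {G : SimpleGraph V} {x a b : V}

lemma avoid_le (G : SimpleGraph V) (x : V) : G.avoid x ≤ G := fun _ _ h => h.1

/-- A walk in `G` avoiding `x` gives a walk in `G.avoid x`. -/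
lemma exists_walk_avoid (p : G.Walk a b) (hx : x ∉ p.support) :
    ∃ q : (G.avoid x).Walk a b, q.length = p.length ∧ q.support = p.support := by
  induction p with
  | nil => exact ⟨Walk.nil, rfl, rfl⟩
  | cons h p ih =>
      rw [Walk.support_cons] at hx
      have hax : _ ≠ x := fun e => hx (e ▸ List.mem_cons_self)
      have hpx : x ∉ p.support := fun e => hx (List.mem_cons_of_mem _ e)
      obtain ⟨q, hq1, hq2⟩ := ih hpx
      have hbx : _ ≠ x := fun e => hpx (e ▸ p.start_mem_support)
      exact ⟨Walk.cons (show (G.avoid x).Adj _ _ from ⟨h, hax, hbx⟩) q, by simp [hq1], by simp [hq2]⟩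

/-- A walk in `G.avoid x` gives a walk in `G`. -/
lemma exists_walk_of_avoid (p : (G.avoid x).Walk a b) :
    ∃ q : G.Walk a b, q.length = p.length ∧ q.support = p.support := by
  induction p with
  | nil => exact ⟨Walk.nil, rfl, rfl⟩
  | cons h p ih =>
      obtain ⟨q, hq1, hq2⟩ := ih
      exact ⟨Walk.cons h.1 q, by simp [hq1], by simp [hq2]⟩

end Aux

/-- Lemma 5.3 of the paper: let `u ∈ B` be nearest to `v`, `Q` a
shortest `v`–`u` path, `x₁ ≠ v` strictly before `x₂` on `Q`, and
`δ(v,B,x₁) ≤ (1+ε)·δ(v,B,x₂)`. Then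
`Ball^{x₁}(v,A,B,ε) ⊆ Ball(v,A,B) ∪ Ball^{x₂}(v,A,B)`. -/
theorem stmt7 {V : Type*} [Fintype V] [DecidableEq V] (G : SimpleGraph V) (v : V)
    (A B : Set V) (ε : ℝ) (hε : 0 < ε) (u : V) (hu : u ∈ B)
    (hnear : G.edist v u = dset G v B)
    (Q : G.Walk v u) (hQ : Q.IsPath) (hQlen : (Q.length : ℕ∞) = G.edist v u)
    (x₁ x₂ : V) (hx₁ : x₁ ∈ Q.support) (hx₂ : x₂ ∈ Q.support) (hx₁v : x₁ ≠ v)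
    (horder : Q.support.idxOf x₁ < Q.support.idxOf x₂)
    (hdB : (dsetAvoid G v B x₁ : ℝ≥0∞)
      ≤ ENNReal.ofReal (1 + ε) * (dsetAvoid G v B x₂ : ℝ≥0∞)) :
    ballTrunc G v A B x₁ ε ⊆ ball G v A B ∪ ballAvoid G v A B x₂ := by

  intro w hw
  obtain ⟨hwA, hlt⟩ := hw
  by_contra hcon
  simp only [Set.mem_union, ball, ballAvoid, Set.mem_sep_iff, not_or, not_and, not_lt] at hcon
  have hdw : dset G v B ≤ G.edist v w := hcon.1 hwA
  have hdw2 : dsetAvoid G v B x₂ ≤ davoid G v w x₂ := hcon.2 hwA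
  set c : ℝ≥0∞ := ENNReal.ofReal (1 + ε) with hc
  have hc1 : 1 ≤ c := ENNReal.one_le_ofReal.mpr (by linarith)
  have hcne0 : c ≠ 0 := by
    simp only [hc, ne_eq, ENNReal.ofReal_eq_zero, not_le]; linarith
  have hcnet : c ≠ ⊤ := ENNReal.ofReal_ne_top
  have hvx₁ : v ≠ x₁ := Ne.symm hx₁v
  -- δ(v,w,x₁) is finite
  have hd₁top : davoid G v w x₁ ≠ ⊤ := by
    intro h
    rw [h] at hlt
    simp only [ENat.toENNReal_top, ENNReal.mul_top hcne0] at hlt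
    exact absurd hlt (not_top_lt)
  have hwx₁ : w ≠ x₁ := by
    intro h; exact hd₁top (by simp [davoid, h])
  have hd₁ : davoid G v w x₁ = (G.avoid x₁).edist v w := by
    simp [davoid, hvx₁, hwx₁]
  -- the final contradiction, used in several branches
  have hfinal : ¬ dsetAvoid G v B x₁ ≤ davoid G v w x₁ := by
    intro hkey
    have h1 : (dsetAvoid G v B x₁ : ℝ≥0∞) ≤ (davoid G v w x₁ : ℝ≥0∞) :=
      ENat.toENNReal_le.mpr hkey
    have h2 : (davoid G v w x₁ : ℝ≥0∞) ≤ c * (davoid G v w x₁ : ℝ≥0∞) :=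
      le_mul_of_one_le_left zero_le hc1
    exact absurd (lt_of_lt_of_le hlt (h1.trans h2)) (lt_irrefl _)
  -- δ(v,w,x₁) < δ(v,w,x₂)
  have hstep3 : davoid G v w x₁ < davoid G v w x₂ := by
    have h3 : c * (davoid G v w x₁ : ℝ≥0∞) < c * (davoid G v w x₂ : ℝ≥0∞) :=
      lt_of_lt_of_le hlt (hdB.trans (by gcongr))
    exact ENat.toENNReal_lt.mp ((ENNReal.mul_lt_mul_iff_right hcne0 hcnet).mp h3)
  -- x₂ ≠ v
  have hx₂v : x₂ ≠ v := by
    intro h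
    rw [h, Q.support_eq_cons, List.idxOf_cons_self] at horder
    exact Nat.not_lt_zero _ horder
  have hvx₂ : v ≠ x₂ := Ne.symm hx₂v
  -- shortest v-w path in G.avoid x₁
  obtain ⟨P, hP⟩ := SimpleGraph.exists_walk_of_edist_ne_top
    (show (G.avoid x₁).edist v w ≠ ⊤ from hd₁ ▸ hd₁top)
  -- split Q at x₂
  set T := Q.takeUntil x₂ hx₂ with hT
  set D := Q.dropUntil x₂ hx₂ with hD
  have hTD : T.append D = Q := Q.take_spec hx₂
  have hlenQ : T.length + D.length = Q.length := by
    rw [← hTD, SimpleGraph.Walk.length_append]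
  have hQsupp : Q.support = T.support ++ D.support.tail := by
    conv_lhs => rw [← hTD]
    exact SimpleGraph.Walk.support_append T D
  have hnd : (T.support ++ D.support.tail).Nodup := hQsupp ▸ hQ.support_nodup
  -- x₁ avoids the suffix D of Q
  have hAfact : x₁ ∉ D.support := by
    intro hx₁D
    have hx₁x₂ : x₁ ≠ x₂ := by rintro rfl; exact lt_irrefl _ horder
    have hx₁tail : x₁ ∈ D.support.tail := by
      rw [D.support_eq_cons] at hx₁D
      rcases List.mem_cons.mp hx₁D with h | h
      · exact absurd h hx₁x₂
      · exact h
    have hx₁T : x₁ ∉ T.support :=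
      fun h => (List.disjoint_of_nodup_append hnd) h hx₁tail
    have hx₂T : x₂ ∈ T.support := T.end_mem_support
    have h1 : Q.support.idxOf x₂ < T.support.length := by
      rw [hQsupp, List.idxOf_append_of_mem hx₂T]
      exact List.idxOf_lt_length_iff.mpr hx₂T
    have h2 : T.support.length ≤ Q.support.idxOf x₁ := by
      rw [hQsupp, List.idxOf_append_of_notMem hx₁T]
      exact Nat.le_add_right _ _
    omega
  have hx₁u : x₁ ≠ u := fun h => hAfact (h ▸ D.end_mem_support)
  by_cases hwx₂ : w = x₂
  · -- w = x₂
    by_cases hx₂u : x₂ = u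
    · -- then w = u ∈ B, contradiction with hfinal
      apply hfinal
      have : w ∈ B := by rw [hwx₂, hx₂u]; exact hu
      exact iInf₂_le w this
    · -- then δ(v,w) ≤ |T| < |Q| = δ(v,B) ≤ δ(v,w)
      have hD1 : 1 ≤ D.length :=
        Nat.one_le_iff_ne_zero.mpr
          (fun h => hx₂u (SimpleGraph.Walk.eq_of_length_eq_zero h))
      have hTw : G.edist v w ≤ (T.length : ℕ∞) := by
        subst hwx₂; exact SimpleGraph.edist_le T
      have hQT : (Q.length : ℕ∞) ≤ (T.length : ℕ∞) := by
        calc (Q.length : ℕ∞) = G.edist v u := hQlen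
          _ = dset G v B := hnear
          _ ≤ G.edist v w := hdw
          _ ≤ (T.length : ℕ∞) := hTw
      have : Q.length ≤ T.length := by exact_mod_cast hQT
      omega
  · -- w ≠ x₂
    by_cases hx₂P : x₂ ∈ P.support
    · -- split P at x₂
      set P₁ := P.takeUntil x₂ hx₂P with hP₁
      set P₂ := P.dropUntil x₂ hx₂P with hP₂
      have hP12 : P₁.append P₂ = P := P.take_spec hx₂P
      have hlenP : P₁.length + P₂.length = P.length := by
        rw [← hP12, SimpleGraph.Walk.length_append]
      -- Fact C : |Q| ≤ |T| + |P₂|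
      obtain ⟨P₂', hP₂'len, _⟩ := exists_walk_of_avoid P₂
      have hC : (Q.length : ℕ∞) ≤ ((T.length + P₂.length : ℕ) : ℕ∞) := by
        have h4 : G.edist v w ≤ ((T.append P₂').length : ℕ∞) := SimpleGraph.edist_le _
        rw [SimpleGraph.Walk.length_append, hP₂'len] at h4
        calc (Q.length : ℕ∞) = G.edist v u := hQlen
          _ = dset G v B := hnear
          _ ≤ G.edist v w := hdw
          _ ≤ _ := h4
      have hC' : Q.length ≤ T.length + P₂.length := by exact_mod_cast hC
      have hDP₂ : D.length ≤ P₂.length := by omega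
      -- Fact B : δ(v,B,x₁) ≤ δ(v,w,x₁)
      apply hfinal
      obtain ⟨D', hD'len, _⟩ := exists_walk_avoid D hAfact
      have hvu : davoid G v u x₁ ≤ ((P₁.length + D.length : ℕ) : ℕ∞) := by
        have : davoid G v u x₁ = (G.avoid x₁).edist v u := by
          simp [davoid, hvx₁, Ne.symm hx₁u]
        rw [this]
        have h5 : (G.avoid x₁).edist v u ≤ ((P₁.append D').length : ℕ∞) :=
          SimpleGraph.edist_le _
        rwa [SimpleGraph.Walk.length_append, hD'len] at h5
      calc dsetAvoid G v B x₁ ≤ davoid G v u x₁ := iInf₂_le u hu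
        _ ≤ ((P₁.length + D.length : ℕ) : ℕ∞) := hvu
        _ ≤ ((P₁.length + P₂.length : ℕ) : ℕ∞) := by
            exact_mod_cast Nat.add_le_add_left hDP₂ _
        _ = (P.length : ℕ∞) := by rw [hlenP]
        _ = davoid G v w x₁ := by rw [hP, hd₁]
    · -- P avoids x₂, contradicting hstep3
      obtain ⟨P', hP'len, hP'supp⟩ := exists_walk_of_avoid P
      have hx₂P' : x₂ ∉ P'.support := by rw [hP'supp]; exact hx₂P
      obtain ⟨P'', hP''len, _⟩ := exists_walk_avoid P' hx₂P'
      have h6 : davoid G v w x₂ ≤ (P.length : ℕ∞) := by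
        have : davoid G v w x₂ = (G.avoid x₂).edist v w := by
          simp [davoid, hvx₂, hwx₂]
        rw [this, ← hP'len, ← hP''len]
        exact SimpleGraph.edist_le _
      rw [hP, ← hd₁] at h6
      exact absurd (lt_of_lt_of_le hstep3 h6) (lt_irrefl _)
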